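/- Let V be a finite-dimensional real vector space, g a symmetric bilinear form on V, u ∈ V with e := g u u ≠ 0, and P v = v − (g u v / e) • u. For an endomorphism G : V →ₗ[ℝ] V define the momentum density covector ψ_G := ρ_G·g(u) + φ_G, i.e. ψ_G v = ρ_G·(g u v) + φ_G v. Then: (i) ψ_G v = (1/e)·g u (G v) for all v ∈ V (the formula p_G = (1/e)·[g(u)](G)(ḡ)); and (ii) G admits the representation G v = (ψ_G v) • u + (g u v) • s_G + S_G v for all v ∈ V (representation of G by means of the projective metrics of u and the momentum density). -/
import Mathlib


/-- The momentum density covector ψ_G = ρ_G·g(u) + φ_G satisfies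
ψ_G = (1/e)·[g(u)](G), and G admits the representation
G = u⊗ψ_G + s_G⊗g(u) + S_G. -/
theorem momentum_density_covector
    (V : Type*) [AddCommGroup V] [Module ℝ V] [FiniteDimensional ℝ V]
    (g : V →ₗ[ℝ] V →ₗ[ℝ] ℝ) (hg : ∀ v w : V, g v w = g w v)
    (u : V) (he : g u u ≠ 0)
    (P : V →ₗ[ℝ] V) (hP : ∀ v : V, P v = v - (g u v / g u u) • u)
    (G : V →ₗ[ℝ] V) :
    (∀ v : V,
      (1 / (g u u) ^ 2) * g u (G u) * (g u v)
        + (1 / (g u u)) * g u (G (P v))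
      = (1 / (g u u)) * g u (G v)) ∧
    (∀ v : V,
      G v = ((1 / (g u u) ^ 2) * g u (G u) * (g u v)
              + (1 / (g u u)) * g u (G (P v))) • u
        + (g u v) • ((1 / (g u u)) • P (G u))
        + P (G (P v))) := by
  have key : ∀ v : V, G (P v) = G v - (g u v / g u u) • G u := by
    intro v; rw [hP]; simp
  constructor
  · intro v
    rw [key]
    simp only [map_sub, map_smul, smul_eq_mul]
    field_simp
    ring
  · intro v
    simp only [key, hP, map_sub, map_smul, smul_eq_mul, smul_sub, sub_smul, smul_smul]
    match_scalars <;> field_simp <;> ring
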